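/- Let R be a Euclidean domain and > a global monomial ordering on the monomials of R[x₁,…,xₙ]. Let H ⊆ R[x₁,…,xₙ] be a finite set and let h, k ∈ H with h ≠ k be nonzero polynomials such that LM(k) divides LM(h). Suppose c := gcd(LC(h), LC(k)) is written as c = a·LC(h) + b·LC(k) with a, b ∈ R and a a unit of R, and set h' := a·h + b·(LM(h)/LM(k))·k. Then LM(h') = LM(h), LC(h') = c, and the ideal generated by (H \ {h}) ∪ {h'} equals the ideal generated by H. -/

import Mathlib

open MvPolynomial

variable {n : ℕ} {R : Type*} [EuclideanDomain R]

/-- The leading exponent of a polynomial w.r.t. a monomial order (leading exponent of 0 is 0). -/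
noncomputable def leadExp (m : MonomialOrder (Fin n)) (f : MvPolynomial (Fin n) R) :
    Fin n →₀ ℕ :=
  m.toSyn.symm (f.support.sup fun d => m.toSyn d)

/-- The leading coefficient. -/
noncomputable def leadCoeff (m : MonomialOrder (Fin n)) (f : MvPolynomial (Fin n) R) : R :=
  f.coeff (leadExp m f)

/-- The leading term. -/
noncomputable def leadTerm (m : MonomialOrder (Fin n)) (f : MvPolynomial (Fin n) R) :
    MvPolynomial (Fin n) R :=
  monomial (leadExp m f) (leadCoeff m f)

/-- The leading monomial, as an element of `WithBot m.syn`; `leadMon m 0 = ⊥`. -/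
noncomputable def leadMon (m : MonomialOrder (Fin n)) (f : MvPolynomial (Fin n) R) :
    WithBot m.syn :=
  f.support.sup fun d => (m.toSyn d : WithBot m.syn)

/-- The leading ideal of a set of polynomials. -/
noncomputable def leadIdeal (m : MonomialOrder (Fin n)) (S : Set (MvPolynomial (Fin n) R)) :
    Ideal (MvPolynomial (Fin n) R) :=
  Ideal.span (leadTerm m '' S)

/-- The S-polynomial. -/
noncomputable def spoly [DecidableEq R] (m : MonomialOrder (Fin n))
    (f g : MvPolynomial (Fin n) R) : MvPolynomial (Fin n) R :=
  monomial (leadExp m f ⊔ leadExp m g - leadExp m f)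
      (EuclideanDomain.lcm (leadCoeff m f) (leadCoeff m g) / leadCoeff m f) * f -
    monomial (leadExp m f ⊔ leadExp m g - leadExp m g)
      (EuclideanDomain.lcm (leadCoeff m f) (leadCoeff m g) / leadCoeff m g) * g

lemma leadExp_mem_support (m : MonomialOrder (Fin n)) {f : MvPolynomial (Fin n) R}
    (hf : f ≠ 0) : leadExp m f ∈ f.support := by
  obtain ⟨d, hd, hsup⟩ := Finset.exists_mem_eq_sup f.support
    (Finset.nonempty_of_ne_empty (mt MvPolynomial.support_eq_empty.mp hf)) (fun d => m.toSyn d)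
  rw [leadExp, hsup]
  simpa using hd

lemma le_leadExp (m : MonomialOrder (Fin n)) {f : MvPolynomial (Fin n) R}
    {d : Fin n →₀ ℕ} (hd : d ∈ f.support) : m.toSyn d ≤ m.toSyn (leadExp m f) := by
  rw [leadExp, AddEquiv.apply_symm_apply]
  exact Finset.le_sup hd

/-- One gcd step in `Interreduce`: if `h ≠ k` are nonzero elements of a finite set `H` with
`LM k ∣ LM h`, and `gcd(LC h, LC k) = a * LC h + b * LC k` with `a` a unit, then for
`h' = a * h + b * (LM h / LM k) * k` we have `LM h' = LM h`, `LC h' = gcd(LC h, LC k)`,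
and the ideal generated by `(H \ {h}) ∪ {h'}` equals the ideal generated by `H`. -/
theorem interreduce_step_gcd
    {n : ℕ} {R : Type*} [EuclideanDomain R] [DecidableEq R]
    (m : MonomialOrder (Fin n))
    (H : Finset (MvPolynomial (Fin n) R))
    (h k : MvPolynomial (Fin n) R) (hh : h ∈ H) (hk : k ∈ H) (hne : h ≠ k)
    (hh0 : h ≠ 0) (hk0 : k ≠ 0)
    (hdvd : leadExp m k ≤ leadExp m h)
    (a b : R) (ha : IsUnit a)
    (hab : EuclideanDomain.gcd (leadCoeff m h) (leadCoeff m k) =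
      a * leadCoeff m h + b * leadCoeff m k)
    (h' : MvPolynomial (Fin n) R)
    (hh' : h' = C a * h + C b * monomial (leadExp m h - leadExp m k) 1 * k) :
    leadExp m h' = leadExp m h ∧
    leadCoeff m h' = EuclideanDomain.gcd (leadCoeff m h) (leadCoeff m k) ∧
    Ideal.span ((H : Set (MvPolynomial (Fin n) R)) \ {h} ∪ {h'}) =
      Ideal.span (H : Set (MvPolynomial (Fin n) R)) := by
  set e := leadExp m h - leadExp m k with he
  have hek : e + leadExp m k = leadExp m h := tsub_add_cancel_of_le hdvd
  have hmono : C b * monomial e (1 : R) = monomial e b := by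
    rw [C_mul_monomial, mul_one]
  -- coefficient of h' at leadExp m h
  have hcoeff : coeff (leadExp m h) h' =
      EuclideanDomain.gcd (leadCoeff m h) (leadCoeff m k) := by
    rw [hh', hmono, coeff_add, coeff_C_mul, ← hek, coeff_monomial_mul, hab, hek]
    rfl
  have hgcd0 : EuclideanDomain.gcd (leadCoeff m h) (leadCoeff m k) ≠ 0 := by
    intro h0
    exact (mem_support_iff.mp (leadExp_mem_support m hh0))
      ((EuclideanDomain.gcd_eq_zero_iff.mp h0).1)
  have hmem : leadExp m h ∈ h'.support := by
    rw [mem_support_iff, hcoeff]; exact hgcd0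
  have hle : ∀ d ∈ h'.support, m.toSyn d ≤ m.toSyn (leadExp m h) := by
    intro d hd
    rw [mem_support_iff, hh', hmono, coeff_add] at hd
    rcases (by by_contra hc; push_neg at hc; rw [hc.1, hc.2, add_zero] at hd; exact hd rfl :
        coeff d (C a * h) ≠ 0 ∨ coeff d (monomial e b * k) ≠ 0) with h1 | h2
    · rw [coeff_C_mul] at h1
      exact le_leadExp m (mem_support_iff.mpr (right_ne_zero_of_mul h1))
    · rw [coeff_monomial_mul'] at h2
      by_cases hed : e ≤ d
      · rw [if_pos hed] at h2
        have h3 : m.toSyn (d - e) ≤ m.toSyn (leadExp m k) :=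
          le_leadExp m (mem_support_iff.mpr (right_ne_zero_of_mul h2))
        calc m.toSyn d = m.toSyn (e + (d - e)) := by rw [add_tsub_cancel_of_le hed]
          _ = m.toSyn e + m.toSyn (d - e) := map_add _ _ _
          _ ≤ m.toSyn e + m.toSyn (leadExp m k) := by exact add_le_add_right h3 _
          _ = m.toSyn (e + leadExp m k) := (map_add _ _ _).symm
          _ = m.toSyn (leadExp m h) := by rw [hek]
      · rw [if_neg hed] at h2; exact absurd rfl h2
  have hLE : leadExp m h' = leadExp m h := by
    have : h'.support.sup (fun d => m.toSyn d) = m.toSyn (leadExp m h) :=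
      le_antisymm (Finset.sup_le hle) (Finset.le_sup hmem)
    rw [leadExp, this, AddEquiv.symm_apply_apply]
  refine ⟨hLE, by rw [leadCoeff, hLE, hcoeff], ?_⟩
  -- ideal equality
  have hkS : k ∈ (H : Set (MvPolynomial (Fin n) R)) \ {h} :=
    ⟨hk, fun hc => hne (hc.symm)⟩
  apply le_antisymm
  · rw [Ideal.span_le]
    rintro x (⟨hxH, -⟩ | rfl)
    · exact Ideal.subset_span hxH
    · rw [hh']
      exact Ideal.add_mem _ (Ideal.mul_mem_left _ _ (Ideal.subset_span hh))
        (Ideal.mul_mem_left _ _ (Ideal.subset_span hk))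
  · rw [Ideal.span_le]
    intro x hxH
    by_cases hx : x = h
    · subst hx
      have hinv : (C (↑ha.unit⁻¹ : R) : MvPolynomial (Fin n) R) * C a = 1 := by
        rw [← C_mul, ha.val_inv_mul, C_1]
      have hx' : x = C (↑ha.unit⁻¹ : R) * h' -
          C (↑ha.unit⁻¹ : R) * (C b * monomial e 1 * k) := by
        rw [hh', mul_add, ← mul_assoc, hinv, one_mul, add_sub_cancel_right]
      have hm := Ideal.sub_mem (Ideal.span ((H : Set (MvPolynomial (Fin n) R)) \ {x} ∪ {h'}))
        (Ideal.mul_mem_left _ (C (↑ha.unit⁻¹ : R)) (Ideal.subset_span (Or.inr rfl)))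
        (Ideal.mul_mem_left _ (C (↑ha.unit⁻¹ : R))
          (Ideal.mul_mem_left _ (C b * monomial e 1) (Ideal.subset_span (Or.inl hkS))))
      rwa [← hx'] at hm
    · exact Ideal.subset_span (Or.inl ⟨hxH, hx⟩)
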